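/- For an odd prime r, with i a primitive fourth root of unity and z an indeterminate, the polynomial identity H(x,z) = 2(iz)^r T_r(x/(2iz)) holds, where H(x,z) = z^{r-1} · x · h((x/z)^2 + 2) and T_r is the r-th Chebyshev polynomial of the first kind. -/

import Mathlib

open Polynomial Finset Complex

private lemma cos_key (u : ℂ) :
    Complex.cos u * (2 * Complex.exp (u * Complex.I)) = Complex.exp (u * Complex.I) ^ 2 + 1 := by
  have e1 := Complex.exp_mul_I u
  have e2 := Complex.exp_mul_I (-u)
  rw [Complex.cos_neg, Complex.sin_neg] at e2
  have e3 : Complex.exp (u * Complex.I) * Complex.exp (-u * Complex.I) = 1 := by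
    rw [← Complex.exp_add]
    have : u * Complex.I + -u * Complex.I = 0 := by ring
    rw [this, Complex.exp_zero]
  linear_combination e3 - Complex.exp (u * Complex.I) * e1 - Complex.exp (u * Complex.I) * e2

private lemma roots_key {r : ℕ} (hr : r.Prime) {ζ : ℂ} (hζ : IsPrimitiveRoot ζ r) (Y : ℂ) :
    ∏ k ∈ Finset.range r, (Y - ζ ^ k) = Y ^ r - 1 := by
  haveI : NeZero r := ⟨hr.ne_zero⟩
  have himg : Polynomial.nthRootsFinset r (1 : ℂ) = Finset.image (fun k => ζ ^ k) (Finset.range r) := by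
    ext μ
    rw [Polynomial.mem_nthRootsFinset hr.pos (1 : ℂ), Finset.mem_image]
    constructor
    · intro hμ
      obtain ⟨i, hik, hi⟩ := hζ.eq_pow_of_pow_eq_one hμ
      exact ⟨i, Finset.mem_range.2 hik, hi⟩
    · rintro ⟨k, -, rfl⟩
      rw [← pow_mul, mul_comm, pow_mul, hζ.pow_eq_one, one_pow]
  have hinj : ∀ a ∈ Finset.range r, ∀ b ∈ Finset.range r, ζ ^ a = ζ ^ b → a = b :=
    fun a ha b hb h => hζ.pow_inj (Finset.mem_range.1 ha) (Finset.mem_range.1 hb) h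
  have h1 := Polynomial.X_pow_sub_one_eq_prod hr.pos hζ
  have h2 := congrArg (Polynomial.eval Y) h1
  simpa [Polynomial.eval_prod, himg, Finset.prod_image hinj] using h2.symm

theorem H_eq_chebyshev (r : ℕ) (hr : r.Prime) (hodd : Odd r)
    (ζ : ℂ) (hζ : IsPrimitiveRoot ζ r) (x z : ℂ) (hz : z ≠ 0) :
    z ^ (r - 1) * x * ∏ j ∈ Finset.Icc 1 ((r - 1) / 2), ((x / z) ^ 2 + 2 - (ζ ^ j + ζ⁻¹ ^ j)) =
      2 * (Complex.I * z) ^ r *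
        Polynomial.eval (x / (2 * Complex.I * z)) (Polynomial.Chebyshev.T ℂ (r : ℤ)) := by
  obtain ⟨θ, hθ⟩ := Complex.cos_surjective (x / (2 * Complex.I * z))
  set w : ℂ := Complex.exp (θ * Complex.I) with hwdef
  have hw : w ≠ 0 := Complex.exp_ne_zero _
  have hcos : Complex.cos θ * (2 * w) = w ^ 2 + 1 := cos_key θ
  have hx : x = 2 * Complex.I * z * Complex.cos θ := by
    rw [hθ]; field_simp
  -- roots product
  have hrange : ∏ k ∈ Finset.range r, (w ^ 2 + ζ ^ k) = (w ^ 2) ^ r + 1 := by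
    have h := roots_key hr hζ (-(w ^ 2))
    rw [Odd.neg_pow hodd] at h
    have h2 : ∏ k ∈ Finset.range r, (-(w ^ 2) - ζ ^ k) =
        (-1) ^ r * ∏ k ∈ Finset.range r, (w ^ 2 + ζ ^ k) := by
      rw [show ((-1 : ℂ)) ^ r = ∏ _k ∈ Finset.range r, (-1 : ℂ) by simp,
        ← Finset.prod_mul_distrib]
      exact Finset.prod_congr rfl fun k _ => by ring
    rw [h2, Odd.neg_one_pow hodd] at h
    linear_combination -h
  obtain ⟨m, hm⟩ := hodd
  have hm2 : (r - 1) / 2 = m := by omega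
  have hr1 : r - 1 = 2 * m := by omega
  rw [hm2, hr1]
  -- split the range product
  have hQ : (∏ k ∈ Finset.Icc 1 (2 * m), (w ^ 2 + ζ ^ k)) * (w ^ 2 + 1) = w ^ (2 * r) + 1 := by
    have e0 : Finset.range r = Finset.Icc 0 (2 * m) := by
      ext k
      simp only [Finset.mem_range, Finset.mem_Icc, hm]
      omega
    have e1 : Finset.Icc 1 (2 * m) = Finset.Ioc 0 (2 * m) := by
      ext k; simp only [Finset.mem_Icc, Finset.mem_Ioc]; omega
    rw [e0, Finset.Icc_eq_cons_Ioc (Nat.zero_le _), Finset.prod_cons] at hrange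
    simp only [pow_zero] at hrange
    rw [e1, pow_mul]
    linear_combination hrange
  -- reindex
  have hreindex : ∏ j ∈ Finset.Icc 1 m, (w ^ 2 + ζ ^ (r - j)) =
      ∏ k ∈ Finset.Icc (m + 1) (2 * m), (w ^ 2 + ζ ^ k) := by
    refine Finset.prod_nbij' (fun j => r - j) (fun k => r - k) ?_ ?_ ?_ ?_ ?_ <;>
      intro a ha <;> simp only [Finset.mem_Icc] at ha ⊢ <;> omega
  have hjoin : (∏ j ∈ Finset.Icc 1 m, (w ^ 2 + ζ ^ j)) *
      ∏ k ∈ Finset.Icc (m + 1) (2 * m), (w ^ 2 + ζ ^ k) =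
      ∏ k ∈ Finset.Icc 1 (2 * m), (w ^ 2 + ζ ^ k) := by
    have e1 : Finset.Icc 1 m = Finset.Ioc 0 m := by
      ext k; simp only [Finset.mem_Icc, Finset.mem_Ioc]; omega
    have e2 : Finset.Icc (m + 1) (2 * m) = Finset.Ioc m (2 * m) := by
      ext k; simp only [Finset.mem_Icc, Finset.mem_Ioc]; omega
    have e3 : Finset.Icc 1 (2 * m) = Finset.Ioc 0 (2 * m) := by
      ext k; simp only [Finset.mem_Icc, Finset.mem_Ioc]; omega
    rw [e1, e2, e3]
    exact Finset.prod_Ioc_consecutive _ (Nat.zero_le m) (by omega)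
  -- individual factors
  have hfac : ∀ j ∈ Finset.Icc 1 m, ((x / z) ^ 2 + 2 - (ζ ^ j + ζ⁻¹ ^ j)) * w ^ 2 =
      -((w ^ 2 + ζ ^ j) * (w ^ 2 + ζ ^ (r - j))) := by
    intro j hj
    simp only [Finset.mem_Icc] at hj
    have hjr : j ≤ r := by omega
    have hzr : ζ ^ (r - j) * ζ ^ j = 1 := by
      rw [← pow_add, Nat.sub_add_cancel hjr, hζ.pow_eq_one]
    have hinvj : ζ⁻¹ ^ j = ζ ^ (r - j) := by
      rw [inv_pow]
      exact (eq_inv_of_mul_eq_one_left hzr).symm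
    have hxz : x / z = 2 * Complex.I * Complex.cos θ := by
      rw [hx]; field_simp
    rw [hinvj, hxz]
    linear_combination 4 * Complex.cos θ ^ 2 * w ^ 2 * Complex.I_sq + hzr -
      (2 * Complex.cos θ * w + w ^ 2 + 1) * hcos
  -- product version
  have hP : (∏ j ∈ Finset.Icc 1 m, ((x / z) ^ 2 + 2 - (ζ ^ j + ζ⁻¹ ^ j))) * (w ^ 2) ^ m =
      (-1) ^ m * ((∏ j ∈ Finset.Icc 1 m, (w ^ 2 + ζ ^ j)) *
        ∏ j ∈ Finset.Icc 1 m, (w ^ 2 + ζ ^ (r - j))) := by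
    have hcard : (Finset.Icc 1 m).card = m := by rw [Nat.card_Icc]; omega
    calc (∏ j ∈ Finset.Icc 1 m, ((x / z) ^ 2 + 2 - (ζ ^ j + ζ⁻¹ ^ j))) * (w ^ 2) ^ m
        = ∏ j ∈ Finset.Icc 1 m, (((x / z) ^ 2 + 2 - (ζ ^ j + ζ⁻¹ ^ j)) * w ^ 2) := by
          rw [Finset.prod_mul_distrib, Finset.prod_const, hcard]
      _ = ∏ j ∈ Finset.Icc 1 m, -((w ^ 2 + ζ ^ j) * (w ^ 2 + ζ ^ (r - j))) :=
          Finset.prod_congr rfl hfac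
      _ = (-1) ^ m * ∏ j ∈ Finset.Icc 1 m, ((w ^ 2 + ζ ^ j) * (w ^ 2 + ζ ^ (r - j))) := by
          rw [show ((-1 : ℂ)) ^ m = ∏ _j ∈ Finset.Icc 1 m, (-1 : ℂ) by simp [hcard],
            ← Finset.prod_mul_distrib]
          exact Finset.prod_congr rfl fun j _ => by ring
      _ = (-1) ^ m * ((∏ j ∈ Finset.Icc 1 m, (w ^ 2 + ζ ^ j)) *
            ∏ j ∈ Finset.Icc 1 m, (w ^ 2 + ζ ^ (r - j))) := by
          rw [Finset.prod_mul_distrib]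
  -- chebyshev side
  rw [← hθ, Polynomial.Chebyshev.T_complex_cos]
  have hcr : Complex.cos (((r : ℤ) : ℂ) * θ) * (2 * w ^ r) = w ^ (2 * r) + 1 := by
    have h := cos_key ((r : ℂ) * θ)
    have hexp : Complex.exp ((r : ℂ) * θ * Complex.I) = w ^ r := by
      rw [mul_assoc, Complex.exp_nat_mul]
    rw [hexp, ← pow_mul, mul_comm r 2] at h
    push_cast
    convert h using 2
  -- final assembly
  have hIr : Complex.I ^ r = (-1) ^ m * Complex.I := by
    rw [hm, pow_succ, pow_mul, Complex.I_sq]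
  have h2w : (2 : ℂ) * w ^ r ≠ 0 := by
    simp [hw]
  apply mul_right_cancel₀ h2w
  have hwr : w ^ r = w * (w ^ 2) ^ m := by
    rw [hm, ← pow_mul, mul_comm 2 m, pow_succ']
  calc z ^ (2 * m) * x *
        (∏ j ∈ Finset.Icc 1 m, ((x / z) ^ 2 + 2 - (ζ ^ j + ζ⁻¹ ^ j))) * (2 * w ^ r)
      = 2 * Complex.I * (z ^ (2 * m) * z) * (Complex.cos θ * (2 * w)) *
        ((∏ j ∈ Finset.Icc 1 m, ((x / z) ^ 2 + 2 - (ζ ^ j + ζ⁻¹ ^ j))) * (w ^ 2) ^ m) := by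
        rw [hx, hwr]; ring
    _ = 2 * Complex.I * z ^ r * ((w ^ 2 + 1) * ((-1) ^ m *
        ((∏ k ∈ Finset.Icc 1 (2 * m), (w ^ 2 + ζ ^ k))))) := by
        rw [hcos, hP, hreindex, hjoin, hm]; ring
    _ = 2 * Complex.I * z ^ r * ((-1) ^ m * (w ^ (2 * r) + 1)) := by
        rw [← hQ]; ring
    _ = 2 * (Complex.I * z) ^ r * Complex.cos (((r : ℤ) : ℂ) * θ) * (2 * w ^ r) := by
        rw [mul_pow, hIr, ← hcr]; ring
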